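/- Let q = p^n ≡ 3 (mod 4) be an odd prime power with p ≠ 3, and χ the quadratic character of 𝔽_q. The number of solutions (y₁, y₂, y₃) ∈ (𝔽_q*)³ of the system y₁+y₂+y₃+1 = 0 and y₁²+y₂²+y₃²+1 = 0 with χ(y₁) = χ(y₂) = 1 and χ(y₃) = −1 equals (1/8)(q − 3λ₁ − 3 − 4χ(−3)), where λ₁ = ∑_{x ∈ 𝔽_q} χ(x(x+1)(x−3)). -/

import Mathlib

open Finset

section Helpers

variable {F : Type*} [Field F] [Fintype F] [DecidableEq F]

private lemma chi_mul_sq (x : F) {y : F} (hy : y ≠ 0) :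
    quadraticChar F (x * y ^ 2) = quadraticChar F x := by
  rw [map_mul, quadraticChar_sq_one' hy, mul_one]

private lemma sum_shift (g : F → ℤ) (c : F) : ∑ x : F, g (x + c) = ∑ x : F, g x :=
  Fintype.sum_equiv (Equiv.addRight c) _ _ (fun _ => rfl)

private lemma sum_affine (g : F → ℤ) {a : F} (ha : a ≠ 0) (b : F) :
    ∑ x : F, g (a * x + b) = ∑ x : F, g x := by
  refine Fintype.sum_bijective (fun x : F => a * x + b) ?_ _ _ (fun _ => rfl)
  refine Finite.injective_iff_bijective.mp ?_
  intro u v huv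
  simpa [ha] using huv

private lemma sum_chi_affine (hF : ringChar F ≠ 2) {a : F} (ha : a ≠ 0) (b : F) :
    ∑ x : F, quadraticChar F (a * x + b) = 0 := by
  rw [sum_affine (fun x => quadraticChar F x) ha b]
  exact quadraticChar_sum_zero hF

private lemma sum_sq_eval (hF : ringChar F ≠ 2) (g : F → ℤ) :
    ∑ x : F, g (x ^ 2) = ∑ y : F, (quadraticChar F y + 1) * g y := by
  rw [← Finset.sum_fiberwise' univ (fun x : F => x ^ 2) g]
  refine Finset.sum_congr rfl fun y _ => ?_
  rw [Finset.sum_const, nsmul_eq_mul]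
  congr 1
  have h := quadraticChar_card_sqrts hF y
  rw [Set.toFinset_setOf] at h
  exact_mod_cast h

private lemma card_quadratic_roots (hF : ringChar F ≠ 2) (B C : F) :
    ((univ.filter fun z : F => z ^ 2 + B * z + C = 0).card : ℤ)
      = 1 + quadraticChar F (B ^ 2 - 4 * C) := by
  have h2 : (2 : F) ≠ 0 := Ring.two_ne_zero hF
  have hcard : (univ.filter fun z : F => z ^ 2 + B * z + C = 0).card
      = (univ.filter fun x : F => x ^ 2 = B ^ 2 - 4 * C).card := by
    refine Finset.card_nbij' (fun z => 2 * z + B) (fun x => (x - B) / 2) ?_ ?_ ?_ ?_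
    · intro z hz
      simp only [mem_coe, mem_filter, mem_univ, true_and] at hz ⊢
      linear_combination (4 : F) * hz
    · intro x hx
      simp only [mem_coe, mem_filter, mem_univ, true_and] at hx ⊢
      field_simp
      linear_combination hx
    · intro z _
      show (2 * z + B - B) / 2 = z
      rw [add_sub_cancel_right, mul_div_cancel_left₀ _ h2]
    · intro x _
      show 2 * ((x - B) / 2) + B = x
      rw [mul_comm, div_mul_cancel₀ _ h2, sub_add_cancel]
  rw [hcard]
  have h := quadraticChar_card_sqrts hF (B ^ 2 - 4 * C)
  rw [Set.toFinset_setOf] at h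
  have h' : ((univ.filter fun x : F => x ^ 2 = B ^ 2 - 4 * C).card : ℤ)
      = quadraticChar F (B ^ 2 - 4 * C) + 1 := by exact_mod_cast h
  rw [h']
  ring

private lemma fib (hF : ringChar F ≠ 2) (g : F → ℤ) :
    ∑ u : F, (1 + quadraticChar F (u ^ 2 - 4)) * g u
      = ∑ x ∈ univ.filter fun x : F => x ≠ 0, g (x + x⁻¹) := by
  have key : ∀ u : F, (1 + quadraticChar F (u ^ 2 - 4)) * g u
      = ∑ x : F, if x ^ 2 + (-u) * x + 1 = 0 then g u else 0 := by
    intro u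
    rw [← Finset.sum_filter, Finset.sum_const, nsmul_eq_mul]
    have := card_quadratic_roots hF (-u) (1 : F)
    rw [this]
    congr 2
    ring
  rw [Finset.sum_congr rfl fun u _ => key u, Finset.sum_comm, Finset.sum_filter]
  refine Finset.sum_congr rfl fun x _ => ?_
  by_cases hx : x = 0
  · subst hx
    simp
  · have hcond : ∀ u : F, (x ^ 2 + (-u) * x + 1 = 0) ↔ (u = x + x⁻¹) := by
      intro u
      constructor
      · intro h
        field_simp
        linear_combination -h
      · intro h
        subst h
        field_simp
        ring
    simp only [hcond]
    rw [Finset.sum_ite_eq' univ (x + x⁻¹) (fun u => g u)]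
    simp [hx]

private lemma sum_chi_sq_sub (hF : ringChar F ≠ 2) {a d : F} (ha : a ≠ 0) (hd : d ≠ 0) :
    ∑ x : F, quadraticChar F (a * (x ^ 2 - d)) = - quadraticChar F a := by
  rw [sum_sq_eval hF (fun y => quadraticChar F (a * (y - d)))]
  have expand : ∀ y : F, (quadraticChar F y + 1) * quadraticChar F (a * (y - d))
      = quadraticChar F (a * y * (y - d)) + quadraticChar F (a * (y - d)) := by
    intro y
    rw [add_mul, one_mul, ← map_mul]
    congr 2
    ring
  rw [Finset.sum_congr rfl fun y _ => expand y, Finset.sum_add_distrib]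
  have h2 : ∑ y : F, quadraticChar F (a * (y - d)) = 0 := by
    have : ∀ y : F, a * (y - d) = a * y + (-(a * d)) := fun y => by ring
    simp_rw [this]
    exact sum_chi_affine hF ha _
  rw [h2, add_zero]
  have h0 : (0 : F) ∈ (univ : Finset F) := mem_univ 0
  rw [← Finset.add_sum_erase univ _ h0]
  have hz : quadraticChar F (a * 0 * (0 - d)) = 0 := by
    rw [show a * 0 * (0 - d) = 0 by ring, quadraticChar_zero]
  rw [hz, zero_add]
  have step : ∀ y ∈ univ.erase (0 : F),
      quadraticChar F (a * y * (y - d)) = quadraticChar F (a * (1 - d * y⁻¹)) := by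
    intro y hy
    have hy0 : y ≠ 0 := by simpa using (Finset.mem_erase.mp hy).1
    rw [show a * y * (y - d) = a * (1 - d * y⁻¹) * y ^ 2 by field_simp]
    exact chi_mul_sq _ hy0
  rw [Finset.sum_congr rfl step]
  have reindex : ∑ y ∈ univ.erase (0 : F), quadraticChar F (a * (1 - d * y⁻¹))
      = ∑ y ∈ univ.erase (0 : F), quadraticChar F (a * (1 - y)) := by
    refine Finset.sum_nbij' (fun y => d * y⁻¹) (fun y => d * y⁻¹) ?_ ?_ ?_ ?_ ?_
    · intro y hy
      have hy0 : y ≠ 0 := by simpa using (Finset.mem_erase.mp hy).1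
      simp only [Finset.mem_erase, Finset.mem_univ, and_true]
      exact mul_ne_zero hd (inv_ne_zero hy0)
    · intro y hy
      have hy0 : y ≠ 0 := by simpa using (Finset.mem_erase.mp hy).1
      simp only [Finset.mem_erase, Finset.mem_univ, and_true]
      exact mul_ne_zero hd (inv_ne_zero hy0)
    · intro y hy
      have hy0 : y ≠ 0 := by simpa using (Finset.mem_erase.mp hy).1
      field_simp
    · intro y hy
      have hy0 : y ≠ 0 := by simpa using (Finset.mem_erase.mp hy).1
      field_simp
    · intro y hy
      rfl
  rw [reindex]
  have final : ∑ y ∈ univ.erase (0 : F), quadraticChar F (a * (1 - y))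
      = (∑ y : F, quadraticChar F (a * (1 - y))) - quadraticChar F a := by
    rw [← Finset.add_sum_erase univ (fun y => quadraticChar F (a * (1 - y))) h0]
    rw [show a * (1 - 0) = a by ring]
    ring
  rw [final]
  have : ∀ y : F, a * (1 - y) = (-a) * y + a := fun y => by ring
  simp_rw [this]
  rw [sum_chi_affine hF (neg_ne_zero.mpr ha) a]
  ring

private lemma sum_chi_quadratic (hF : ringChar F ≠ 2) {a b c : F} (ha : a ≠ 0)
    (hd : b ^ 2 - 4 * (a * c) ≠ 0) :
    ∑ x : F, quadraticChar F (a * x ^ 2 + b * x + c) = - quadraticChar F a := by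
  have h2 : (2 : F) ≠ 0 := Ring.two_ne_zero hF
  have h4 : (4 : F) ≠ 0 := by
    have h : (4 : F) = 2 ^ 2 := by norm_num
    rw [h]; exact pow_ne_zero _ h2
  have ha2 : (4 : F) * a ^ 2 ≠ 0 := mul_ne_zero h4 (pow_ne_zero _ ha)
  set e : F := (b ^ 2 - 4 * (a * c)) / (4 * a ^ 2) with he
  have hee : e ≠ 0 := div_ne_zero hd ha2
  have key : ∀ x : F, a * x ^ 2 + b * x + c = a * ((x + b / (2 * a)) ^ 2 - e) := by
    intro x
    rw [he]
    field_simp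
    ring
  simp_rw [key]
  rw [sum_shift (fun y => quadraticChar F (a * (y ^ 2 - e))) (b / (2 * a))]
  exact sum_chi_sq_sub hF ha hee

end Helpers
section Sums

variable {F : Type*} [Field F] [Fintype F] [DecidableEq F]

private lemma sum_eq_fib (hF : ringChar F ≠ 2) (f : F → ℤ) (g : F → ℤ)
    (h0 : f 0 = 0) (hpt : ∀ x : F, x ≠ 0 → f x = g (x + x⁻¹)) :
    ∑ x : F, f x = ∑ u : F, (1 + quadraticChar F (u ^ 2 - 4)) * g u := by
  rw [fib hF g]
  rw [← Finset.sum_filter_of_ne (s := univ) (f := f) (p := fun x : F => x ≠ 0)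
    (fun x _ hfx => by rintro rfl; exact hfx h0)]
  exact Finset.sum_congr rfl fun x hx => hpt x (Finset.mem_filter.mp hx).2

private lemma chi4 (hF : ringChar F ≠ 2) : quadraticChar F (4 : F) = 1 := by
  have h2 : (2 : F) ≠ 0 := Ring.two_ne_zero hF
  rw [show (4 : F) = 2 ^ 2 by norm_num]
  exact quadraticChar_sq_one' h2

private lemma chi16 (hF : ringChar F ≠ 2) : quadraticChar F (16 : F) = 1 := by
  have h2 : (2 : F) ≠ 0 := Ring.two_ne_zero hF
  rw [show (16 : F) = 4 ^ 2 by norm_num]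
  refine quadraticChar_sq_one' ?_
  rw [show (4 : F) = 2 ^ 2 by norm_num]
  exact pow_ne_zero _ h2

/-- `∑ χ(t²+t+1) = -1` -/
private lemma sum_C (hF : ringChar F ≠ 2) (h3 : (3 : F) ≠ 0) :
    ∑ t : F, quadraticChar F (t ^ 2 + t + 1) = -1 := by
  have h : ∀ t : F, t ^ 2 + t + 1 = 1 * t ^ 2 + 1 * t + 1 := fun t => by ring
  simp_rw [h]
  rw [sum_chi_quadratic hF one_ne_zero (by
    rw [show (1 : F) ^ 2 - 4 * (1 * 1) = -3 by norm_num]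
    exact neg_ne_zero.mpr h3)]
  simp

/-- `∑ χ(-3t²-2t-3) = -χ(-3)` -/
private lemma sum_D (hF : ringChar F ≠ 2) (h3 : (3 : F) ≠ 0) :
    ∑ t : F, quadraticChar F (-3 * t ^ 2 - 2 * t - 3) = - quadraticChar F (-3) := by
  have h2 : (2 : F) ≠ 0 := Ring.two_ne_zero hF
  have h : ∀ t : F, -3 * t ^ 2 - 2 * t - 3 = (-3) * t ^ 2 + (-2) * t + (-3) := fun t => by ring
  simp_rw [h]
  exact sum_chi_quadratic hF (neg_ne_zero.mpr h3) (by
    rw [show ((-2 : F)) ^ 2 - 4 * ((-3) * (-3)) = -(2 ^ 5) by norm_num]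
    exact neg_ne_zero.mpr (pow_ne_zero _ h2))

/-- `∑ χ((u+1)(-3u-2)) = -χ(-3)` -/
private lemma sum_Wq (hF : ringChar F ≠ 2) (h3 : (3 : F) ≠ 0) :
    ∑ u : F, quadraticChar F ((u + 1) * (-3 * u - 2)) = - quadraticChar F (-3) := by
  have h : ∀ u : F, (u + 1) * (-3 * u - 2) = (-3) * u ^ 2 + (-5) * u + (-2) := fun u => by ring
  simp_rw [h]
  exact sum_chi_quadratic hF (neg_ne_zero.mpr h3) (by
    rw [show ((-5 : F)) ^ 2 - 4 * ((-3) * (-2)) = 1 by norm_num]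
    exact one_ne_zero)

/-- `λ_a = λ₁` -/
private lemma lam_a_eq (hF : ringChar F ≠ 2) :
    ∑ t : F, quadraticChar F (t * (t ^ 2 + t + 1))
      = ∑ x : F, quadraticChar F (x * (x + 1) * (x - 3)) := by
  rw [sum_eq_fib hF _ (fun u => quadraticChar F (u + 1))
    (by rw [zero_mul, quadraticChar_zero])
    (fun x hx => by
      rw [show x * (x ^ 2 + x + 1) = (x + x⁻¹ + 1) * x ^ 2 by field_simp; ring]
      exact chi_mul_sq _ hx)]
  have expand : ∀ u : F, (1 + quadraticChar F (u ^ 2 - 4)) * quadraticChar F (u + 1)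
      = quadraticChar F (u + 1) + quadraticChar F ((u + 1) * (u ^ 2 - 4)) := by
    intro u; rw [map_mul]; ring
  rw [Finset.sum_congr rfl fun u _ => expand u, Finset.sum_add_distrib]
  have hz : ∑ u : F, quadraticChar F (u + 1) = 0 := by
    have := sum_chi_affine hF (a := (1 : F)) one_ne_zero 1
    simpa using this
  rw [hz, zero_add]
  rw [← sum_shift (fun u => quadraticChar F ((u + 1) * (u ^ 2 - 4))) (-1)]
  refine Finset.sum_congr rfl fun x _ => ?_
  congr 1
  ring

/-- Möbius step : `∑ χ((-3u-2)(u²-4)) = χ(-3) + Q''` -/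
private lemma cstar_eq (hF : ringChar F ≠ 2) :
    ∑ u : F, quadraticChar F ((-3 * u - 2) * (u ^ 2 - 4))
      = quadraticChar F (-3)
        + ∑ v : F, quadraticChar F ((v ^ 2 - 4) * (v + 1) * (-3 * v - 2)) := by
  rw [← Finset.add_sum_erase univ (fun u => quadraticChar F ((-3 * u - 2) * (u ^ 2 - 4)))
    (mem_univ (-1 : F))]
  congr 1
  · congr 1
    norm_num
  have hqm1 : quadraticChar F (((-1 : F) ^ 2 - 4) * ((-1) + 1) * (-3 * (-1) - 2)) = 0 := by
    rw [show (((-1 : F)) ^ 2 - 4) * ((-1) + 1) * (-3 * (-1) - 2) = 0 by norm_num,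
      quadraticChar_zero]
  rw [← Finset.add_sum_erase univ
    (fun v => quadraticChar F ((v ^ 2 - 4) * (v + 1) * (-3 * v - 2))) (mem_univ (-1 : F)),
    hqm1, zero_add]
  refine (Finset.sum_nbij' (fun v => -v * (v + 1)⁻¹) (fun u => -u * (u + 1)⁻¹) ?_ ?_ ?_ ?_ ?_).symm
  · intro v hv
    have hv1 : v + 1 ≠ 0 := by
      intro h
      exact (Finset.mem_erase.mp hv).1 (by linear_combination h)
    simp only [Finset.mem_erase, Finset.mem_univ, and_true]
    intro h
    have h2 := congrArg (· * (v + 1)) h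
    rw [mul_assoc, inv_mul_cancel₀ hv1, mul_one] at h2
    exact one_ne_zero (α := F) (by linear_combination h2)
  · intro u hu
    have hu1 : u + 1 ≠ 0 := by
      intro h
      exact (Finset.mem_erase.mp hu).1 (by linear_combination h)
    simp only [Finset.mem_erase, Finset.mem_univ, and_true]
    intro h
    have h2 := congrArg (· * (u + 1)) h
    rw [mul_assoc, inv_mul_cancel₀ hu1, mul_one] at h2
    exact one_ne_zero (α := F) (by linear_combination h2)
  · intro v hv
    have hv1 : v + 1 ≠ 0 := by
      intro h
      exact (Finset.mem_erase.mp hv).1 (by linear_combination h)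
    have h1 : (-v * (v + 1)⁻¹) + 1 = (v + 1)⁻¹ := by field_simp; ring
    show -(-v * (v + 1)⁻¹) * ((-v * (v + 1)⁻¹) + 1)⁻¹ = v
    rw [h1, inv_inv]
    field_simp
  · intro u hu
    have hu1 : u + 1 ≠ 0 := by
      intro h
      exact (Finset.mem_erase.mp hu).1 (by linear_combination h)
    have h1 : (-u * (u + 1)⁻¹) + 1 = (u + 1)⁻¹ := by field_simp; ring
    show -(-u * (u + 1)⁻¹) * ((-u * (u + 1)⁻¹) + 1)⁻¹ = u
    rw [h1, inv_inv]
    field_simp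
  · intro v hv
    have hv1 : v + 1 ≠ 0 := by
      intro h
      exact (Finset.mem_erase.mp hv).1 (by linear_combination h)
    have key : (-3 * (-v * (v + 1)⁻¹) - 2) * ((-v * (v + 1)⁻¹) ^ 2 - 4)
        = ((v ^ 2 - 4) * (v + 1) * (-3 * v - 2)) * (((v + 1)⁻¹ ^ 2) ^ 2) := by
      field_simp
      ring
    rw [key, chi_mul_sq _ (pow_ne_zero _ (inv_ne_zero hv1))]

end Sums
section Sums2

variable {F : Type*} [Field F] [Fintype F] [DecidableEq F]

/-- Möbius step : `∑ χ((10-3u)(u²-4)) = λ₁` -/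
private lemma cubic2_eq (hF : ringChar F ≠ 2) :
    ∑ u : F, quadraticChar F ((10 - 3 * u) * (u ^ 2 - 4))
      = ∑ x : F, quadraticChar F (x * (x + 1) * (x - 3)) := by
  have h2 : (2 : F) ≠ 0 := Ring.two_ne_zero hF
  have h4 : (4 : F) ≠ 0 := by
    rw [show (4 : F) = 2 ^ 2 by norm_num]; exact pow_ne_zero _ h2
  have h8 : (8 : F) ≠ 0 := by
    rw [show (8 : F) = 2 ^ 3 by norm_num]; exact pow_ne_zero _ h2
  have hl : quadraticChar F ((10 - 3 * (2 : F)) * ((2 : F) ^ 2 - 4)) = 0 := by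
    rw [show ((10 : F) - 3 * 2) * ((2 : F) ^ 2 - 4) = 0 by norm_num, quadraticChar_zero]
  have hr : quadraticChar F ((0 : F) * (0 + 1) * (0 - 3)) = 0 := by
    rw [show ((0 : F)) * (0 + 1) * (0 - 3) = 0 by norm_num, quadraticChar_zero]
  rw [← Finset.add_sum_erase univ (fun u => quadraticChar F ((10 - 3 * u) * (u ^ 2 - 4)))
    (mem_univ (2 : F)), hl, zero_add]
  rw [← Finset.add_sum_erase univ (fun x => quadraticChar F (x * (x + 1) * (x - 3)))
    (mem_univ (0 : F)), hr, zero_add]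
  refine (Finset.sum_nbij' (fun v => 2 + 4 * v⁻¹) (fun u => 4 * (u - 2)⁻¹) ?_ ?_ ?_ ?_ ?_).symm
  · intro v hv
    have hv0 : v ≠ 0 := (Finset.mem_erase.mp hv).1
    simp only [Finset.mem_erase, Finset.mem_univ, and_true]
    intro h
    have h' : 4 * v⁻¹ = 0 := by linear_combination h
    rcases mul_eq_zero.mp h' with h'' | h''
    · exact h4 h''
    · exact hv0 (inv_eq_zero.mp h'')
  · intro u hu
    have hu2 : u - 2 ≠ 0 := sub_ne_zero.mpr (Finset.mem_erase.mp hu).1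
    simp only [Finset.mem_erase, Finset.mem_univ, and_true]
    exact mul_ne_zero h4 (inv_ne_zero hu2)
  · intro v hv
    have hv0 : v ≠ 0 := (Finset.mem_erase.mp hv).1
    show 4 * (2 + 4 * v⁻¹ - 2)⁻¹ = v
    rw [show (2 : F) + 4 * v⁻¹ - 2 = 4 * v⁻¹ by ring, mul_inv, inv_inv]
    field_simp
  · intro u hu
    have hu2 : u - 2 ≠ 0 := sub_ne_zero.mpr (Finset.mem_erase.mp hu).1
    show 2 + 4 * (4 * (u - 2)⁻¹)⁻¹ = u
    rw [mul_inv, inv_inv]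
    field_simp
    ring
  · intro v hv
    have hv0 : v ≠ 0 := (Finset.mem_erase.mp hv).1
    have key : (10 - 3 * (2 + 4 * v⁻¹)) * ((2 + 4 * v⁻¹) ^ 2 - 4)
        = (v * (v + 1) * (v - 3)) * ((8 * (v⁻¹) ^ 2) ^ 2) := by
      field_simp
      ring
    rw [key, chi_mul_sq _ (mul_ne_zero h8 (pow_ne_zero _ (inv_ne_zero hv0)))]

/-- `∑ χ(g₂) = λ₁` where `g₂ = (u-2)(u+1)(-3u-2)` -/
private lemma g2_eq (hF : ringChar F ≠ 2) (h3 : (3 : F) ≠ 0) :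
    ∑ u : F, quadraticChar F ((u - 2) * (u + 1) * (-3 * u - 2))
      = ∑ x : F, quadraticChar F (x * (x + 1) * (x - 3)) := by
  rw [← sum_shift (fun u => quadraticChar F ((u - 2) * (u + 1) * (-3 * u - 2))) (-1)]
  rw [sum_eq_fib hF _ (fun u => quadraticChar F (10 - 3 * u))
    (by rw [show ((0 : F) + -1 - 2) * (0 + -1 + 1) * (-3 * (0 + -1) - 2) = 0 by norm_num,
      quadraticChar_zero])
    (fun x hx => by
      rw [show (x + -1 - 2) * (x + -1 + 1) * (-3 * (x + -1) - 2)
          = (10 - 3 * (x + x⁻¹)) * x ^ 2 by field_simp; ring]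
      exact chi_mul_sq _ hx)]
  have expand : ∀ u : F, (1 + quadraticChar F (u ^ 2 - 4)) * quadraticChar F (10 - 3 * u)
      = quadraticChar F (10 - 3 * u) + quadraticChar F ((10 - 3 * u) * (u ^ 2 - 4)) := by
    intro u; rw [map_mul]; ring
  rw [Finset.sum_congr rfl fun u _ => expand u, Finset.sum_add_distrib]
  have hz : ∑ u : F, quadraticChar F (10 - 3 * u) = 0 := by
    have h : ∀ u : F, (10 : F) - 3 * u = (-3) * u + 10 := fun u => by ring
    simp_rw [h]
    exact sum_chi_affine hF (neg_ne_zero.mpr h3) 10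
  rw [hz, zero_add]
  exact cubic2_eq hF

/-- `Ã = χ(-3) + Q''` -/
private lemma sumA_eq (hF : ringChar F ≠ 2) (h3 : (3 : F) ≠ 0) :
    ∑ t : F, quadraticChar F (t * (-3 * t ^ 2 - 2 * t - 3))
      = quadraticChar F (-3)
        + ∑ v : F, quadraticChar F ((v ^ 2 - 4) * (v + 1) * (-3 * v - 2)) := by
  rw [sum_eq_fib hF _ (fun u => quadraticChar F (-3 * u - 2))
    (by rw [zero_mul, quadraticChar_zero])
    (fun x hx => by
      rw [show x * (-3 * x ^ 2 - 2 * x - 3) = (-3 * (x + x⁻¹) - 2) * x ^ 2 by field_simp; ring]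
      exact chi_mul_sq _ hx)]
  have expand : ∀ u : F, (1 + quadraticChar F (u ^ 2 - 4)) * quadraticChar F (-3 * u - 2)
      = quadraticChar F (-3 * u - 2) + quadraticChar F ((-3 * u - 2) * (u ^ 2 - 4)) := by
    intro u; rw [map_mul]; ring
  rw [Finset.sum_congr rfl fun u _ => expand u, Finset.sum_add_distrib]
  have hz : ∑ u : F, quadraticChar F (-3 * u - 2) = 0 := by
    have h : ∀ u : F, (-3 : F) * u - 2 = (-3) * u + (-2) := fun u => by ring
    simp_rw [h]
    exact sum_chi_affine hF (neg_ne_zero.mpr h3) (-2)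
  rw [hz, zero_add]
  exact cstar_eq hF

/-- `Q4 = Q''` -/
private lemma sumQ4_eq (hF : ringChar F ≠ 2) (h3 : (3 : F) ≠ 0) :
    ∑ t : F, quadraticChar F ((t ^ 2 + t + 1) * (-3 * t ^ 2 - 2 * t - 3))
      = ∑ v : F, quadraticChar F ((v ^ 2 - 4) * (v + 1) * (-3 * v - 2)) := by
  rw [← Finset.add_sum_erase univ
    (fun t => quadraticChar F ((t ^ 2 + t + 1) * (-3 * t ^ 2 - 2 * t - 3))) (mem_univ (0 : F))]
  have h0 : quadraticChar F (((0 : F) ^ 2 + 0 + 1) * (-3 * (0 : F) ^ 2 - 2 * 0 - 3))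
      = quadraticChar F (-3) := by
    congr 1
    norm_num
  rw [h0]
  have herase : ∑ t ∈ univ.erase (0 : F),
      quadraticChar F ((t ^ 2 + t + 1) * (-3 * t ^ 2 - 2 * t - 3))
      = ∑ t ∈ univ.filter (fun x : F => x ≠ 0),
          quadraticChar F ((t ^ 2 + t + 1) * (-3 * t ^ 2 - 2 * t - 3)) := by
    rw [Finset.filter_ne']
  rw [herase]
  have hpt : ∀ t ∈ univ.filter (fun x : F => x ≠ 0),
      quadraticChar F ((t ^ 2 + t + 1) * (-3 * t ^ 2 - 2 * t - 3))
      = (fun u => quadraticChar F ((u + 1) * (-3 * u - 2))) (t + t⁻¹) := by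
    intro t ht
    have ht0 : t ≠ 0 := (Finset.mem_filter.mp ht).2
    simp only []
    rw [show (t ^ 2 + t + 1) * (-3 * t ^ 2 - 2 * t - 3)
        = ((t + t⁻¹ + 1) * (-3 * (t + t⁻¹) - 2)) * t ^ 2 by field_simp; ring]
    exact chi_mul_sq _ ht0
  rw [Finset.sum_congr rfl hpt, ← fib hF (fun u => quadraticChar F ((u + 1) * (-3 * u - 2)))]
  have expand : ∀ u : F,
      (1 + quadraticChar F (u ^ 2 - 4)) * quadraticChar F ((u + 1) * (-3 * u - 2))
      = quadraticChar F ((u + 1) * (-3 * u - 2))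
        + quadraticChar F ((u ^ 2 - 4) * (u + 1) * (-3 * u - 2)) := by
    intro u
    have hmerge : quadraticChar F ((u ^ 2 - 4) * (u + 1) * (-3 * u - 2))
        = quadraticChar F (u ^ 2 - 4) * quadraticChar F ((u + 1) * (-3 * u - 2)) := by
      rw [← map_mul]
      congr 1
      ring
    rw [hmerge]
    ring
  rw [Finset.sum_congr rfl fun u _ => expand u, Finset.sum_add_distrib, sum_Wq hF h3]
  ring

/-- `λ_b = 2 λ₁` -/
private lemma lam_b_eq (hF : ringChar F ≠ 2) (h3 : (3 : F) ≠ 0) :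
    ∑ t : F, quadraticChar F (t * (t ^ 2 + t + 1) * (-3 * t ^ 2 - 2 * t - 3))
      = 2 * ∑ x : F, quadraticChar F (x * (x + 1) * (x - 3)) := by
  have h2 : (2 : F) ≠ 0 := Ring.two_ne_zero hF
  have h4 : (4 : F) ≠ 0 := by
    rw [show (4 : F) = 2 ^ 2 by norm_num]; exact pow_ne_zero _ h2
  -- drop t = 0
  have hsplit0 : ∑ t : F, quadraticChar F (t * (t ^ 2 + t + 1) * (-3 * t ^ 2 - 2 * t - 3))
      = ∑ t ∈ univ.erase (0 : F),
          quadraticChar F (t * (t ^ 2 + t + 1) * (-3 * t ^ 2 - 2 * t - 3)) := by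
    rw [← Finset.add_sum_erase univ _ (mem_univ (0 : F)),
      show (0 : F) * (0 ^ 2 + 0 + 1) * (-3 * 0 ^ 2 - 2 * 0 - 3) = 0 by norm_num,
      quadraticChar_zero, zero_add]
  rw [hsplit0]
  -- split off t = -1
  have hm1 : (-1 : F) ∈ univ.erase (0 : F) := by
    simp only [Finset.mem_erase, Finset.mem_univ, and_true]
    exact neg_ne_zero.mpr one_ne_zero
  rw [← Finset.add_sum_erase _ _ hm1]
  have hv1 : quadraticChar F ((-1 : F) * ((-1) ^ 2 + (-1) + 1) * (-3 * (-1) ^ 2 - 2 * (-1) - 3))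
      = 1 := by
    rw [show ((-1 : F)) * ((-1) ^ 2 + (-1) + 1) * (-3 * (-1) ^ 2 - 2 * (-1) - 3) = 4 by norm_num]
    exact chi4 hF
  rw [hv1]
  -- pointwise rewrite on the double erase
  set G : F → ℤ := fun u => quadraticChar F ((u + 2) * (u + 1) * (-3 * u - 2)) with hGdef
  have hpt : ∀ t ∈ (univ.erase (0 : F)).erase (-1 : F),
      quadraticChar F (t * (t ^ 2 + t + 1) * (-3 * t ^ 2 - 2 * t - 3))
      = G (t + t⁻¹) := by
    intro t ht
    have ht1 : t + 1 ≠ 0 := by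
      intro h
      exact (Finset.mem_erase.mp ht).1 (by linear_combination h)
    have ht0 : t ≠ 0 := (Finset.mem_erase.mp (Finset.mem_erase.mp ht).2).1
    rw [hGdef]
    simp only []
    rw [show t * (t ^ 2 + t + 1) * (-3 * t ^ 2 - 2 * t - 3)
        = ((t + t⁻¹ + 2) * (t + t⁻¹ + 1) * (-3 * (t + t⁻¹) - 2)) * (t ^ 2 * (t + 1)⁻¹) ^ 2 by
      field_simp; ring]
    exact chi_mul_sq _ (mul_ne_zero (pow_ne_zero _ ht0) (inv_ne_zero ht1))
  rw [Finset.sum_congr rfl hpt]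
  -- add back t = -1 into the inner sum (value there is χ(0)=0)
  have hG1 : G ((-1 : F) + (-1)⁻¹) = 0 := by
    rw [hGdef]
    simp only []
    rw [show ((-1 : F) + (-1)⁻¹ + 2) * ((-1 : F) + (-1)⁻¹ + 1) * (-3 * ((-1 : F) + (-1)⁻¹) - 2)
        = 0 by rw [inv_neg, inv_one]; ring, quadraticChar_zero]
  rw [show ∑ t ∈ (univ.erase (0 : F)).erase (-1 : F), G (t + t⁻¹)
      = ∑ t ∈ univ.erase (0 : F), G (t + t⁻¹) - 0 by
    rw [← hG1, ← Finset.add_sum_erase (univ.erase (0 : F)) _ hm1]; ring]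
  rw [sub_zero]
  have herase : ∑ t ∈ univ.erase (0 : F), G (t + t⁻¹)
      = ∑ t ∈ univ.filter (fun x : F => x ≠ 0), G (t + t⁻¹) := by
    rw [Finset.filter_ne']
  rw [herase, ← fib hF G]
  have expand : ∀ u : F,
      (1 + quadraticChar F (u ^ 2 - 4)) * G u
      = quadraticChar F ((u + 2) * (u + 1) * (-3 * u - 2))
        + quadraticChar F ((u + 2) * (u + 1) * (-3 * u - 2) * (u ^ 2 - 4)) := by
    intro u
    rw [hGdef]
    simp only []
    have hmerge : quadraticChar F ((u + 2) * (u + 1) * (-3 * u - 2) * (u ^ 2 - 4))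
        = quadraticChar F ((u + 2) * (u + 1) * (-3 * u - 2)) * quadraticChar F (u ^ 2 - 4) := by
      rw [← map_mul]
    rw [hmerge]
    ring
  rw [Finset.sum_congr rfl fun u _ => expand u, Finset.sum_add_distrib]
  -- first piece: ∑ χ(W) = λ₁
  have hW : ∑ u : F, quadraticChar F ((u + 2) * (u + 1) * (-3 * u - 2))
      = ∑ x : F, quadraticChar F (x * (x + 1) * (x - 3)) := by
    rw [← sum_affine (fun u => quadraticChar F ((u + 2) * (u + 1) * (-3 * u - 2)))
      (inv_ne_zero (neg_ne_zero.mpr h3)) (-1)]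
    refine Finset.sum_congr rfl fun x _ => ?_
    rw [show ((-3 : F)⁻¹ * x + -1 + 2) * ((-3 : F)⁻¹ * x + -1 + 1)
          * (-3 * ((-3 : F)⁻¹ * x + -1) - 2)
        = (x * (x + 1) * (x - 3)) * ((3 : F)⁻¹) ^ 2 by
      rw [inv_neg]
      field_simp
      ring]
    exact chi_mul_sq _ (inv_ne_zero h3)
  -- second piece: ∑ χ(W·(u²-4)) = ∑ χ(g₂) - 1
  have hW2 : ∑ u : F, quadraticChar F ((u + 2) * (u + 1) * (-3 * u - 2) * (u ^ 2 - 4))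
      = ∑ u : F, quadraticChar F ((u - 2) * (u + 1) * (-3 * u - 2)) - 1 := by
    rw [← Finset.add_sum_erase univ
      (fun u => quadraticChar F ((u + 2) * (u + 1) * (-3 * u - 2) * (u ^ 2 - 4)))
      (mem_univ (-2 : F)),
      show ((-2 : F) + 2) * ((-2) + 1) * (-3 * (-2) - 2) * ((-2 : F) ^ 2 - 4) = 0 by norm_num,
      quadraticChar_zero, zero_add]
    rw [← Finset.add_sum_erase univ
      (fun u => quadraticChar F ((u - 2) * (u + 1) * (-3 * u - 2))) (mem_univ (-2 : F)),
      show ((-2 : F) - 2) * ((-2) + 1) * (-3 * (-2) - 2) = 16 by norm_num, chi16 hF]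
    rw [add_sub_cancel_left]
    refine Finset.sum_congr rfl fun u hu => ?_
    have hu2 : u + 2 ≠ 0 := by
      intro h
      exact (Finset.mem_erase.mp hu).1 (by linear_combination h)
    rw [show (u + 2) * (u + 1) * (-3 * u - 2) * (u ^ 2 - 4)
        = ((u - 2) * (u + 1) * (-3 * u - 2)) * (u + 2) ^ 2 by ring]
    exact chi_mul_sq _ hu2
  rw [hW, hW2, g2_eq hF h3]
  ring

end Sums2
section Conic

variable {F : Type*} [Field F] [Fintype F] [DecidableEq F]

private def Sset (F : Type*) [Field F] [Fintype F] [DecidableEq F] : Finset (F × F) :=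
  univ.filter (fun p => p.2 ^ 2 + (1 + p.1) * p.2 + (p.1 ^ 2 + p.1 + 1) = 0)

private lemma mem_Sset {p : F × F} :
    p ∈ Sset F ↔ p.2 ^ 2 + (1 + p.1) * p.2 + (p.1 ^ 2 + p.1 + 1) = 0 := by
  simp [Sset]

private lemma S_fiber (hF : ringChar F ≠ 2) (h : F → ℤ) :
    ∑ p ∈ Sset F, h p.1 = ∑ t : F, (1 + quadraticChar F (-3 * t ^ 2 - 2 * t - 3)) * h t := by
  rw [Sset, Finset.sum_filter, Fintype.sum_prod_type]
  refine Finset.sum_congr rfl fun t _ => ?_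
  dsimp only
  rw [← Finset.sum_filter, Finset.sum_const, nsmul_eq_mul]
  congr 1
  rw [card_quadratic_roots hF (1 + t) (t ^ 2 + t + 1)]
  congr 2
  ring

private lemma S_swap (f : F → F → F → ℤ) :
    ∑ p ∈ Sset F, f p.2 (-1 - p.1 - p.2) p.1
      = ∑ p ∈ Sset F, f (-1 - p.1 - p.2) p.2 p.1 := by
  refine Finset.sum_nbij' (fun p => (p.1, -1 - p.1 - p.2)) (fun p => (p.1, -1 - p.1 - p.2))
    ?_ ?_ ?_ ?_ ?_
  · intro p hp
    rw [mem_Sset] at hp ⊢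
    linear_combination hp
  · intro p hp
    rw [mem_Sset] at hp ⊢
    linear_combination hp
  · intro p _
    rw [Prod.mk.injEq]
    exact ⟨rfl, by ring⟩
  · intro p _
    rw [Prod.mk.injEq]
    exact ⟨rfl, by ring⟩
  · intro p _
    show f p.2 (-1 - p.1 - p.2) p.1 = f (-1 - p.1 - (-1 - p.1 - p.2)) (-1 - p.1 - p.2) p.1
    rw [show (-1 : F) - p.1 - (-1 - p.1 - p.2) = p.2 by ring]

private lemma S_swap13 (f : F → F → F → ℤ) :
    ∑ p ∈ Sset F, f p.2 (-1 - p.1 - p.2) p.1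
      = ∑ p ∈ Sset F, f p.1 (-1 - p.1 - p.2) p.2 := by
  refine Finset.sum_nbij' (fun p => (p.2, p.1)) (fun p => (p.2, p.1)) ?_ ?_ ?_ ?_ ?_
  · intro p hp
    rw [mem_Sset] at hp ⊢
    linear_combination hp
  · intro p hp
    rw [mem_Sset] at hp ⊢
    linear_combination hp
  · intro p _; rfl
  · intro p _; rfl
  · intro p _
    show f p.2 (-1 - p.1 - p.2) p.1 = f p.2 (-1 - p.2 - p.1) p.1
    rw [show (-1 : F) - p.2 - p.1 = -1 - p.1 - p.2 by ring]

private lemma chi_root_one {t : F} (ht : t ^ 2 + t + 1 = 0) : quadraticChar F t = 1 := by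
  have ht0 : t ≠ 0 := by
    rintro rfl
    norm_num at ht
  have hcube : t ^ 3 = 1 := by linear_combination (t - 1) * ht
  have h1 : quadraticChar F t ^ 3 = 1 := by rw [← map_pow, hcube, map_one]
  rcases quadraticChar_dichotomy ht0 with h | h
  · exact h
  · rw [h] at h1; norm_num at h1

private lemma root_ne_zero {t : F} (ht : t ^ 2 + t + 1 = 0) : t ≠ 0 := by
  rintro rfl
  norm_num at ht

private lemma card_Croots (hF : ringChar F ≠ 2) :
    ((univ.filter fun t : F => t ^ 2 + t + 1 = 0).card : ℤ)
      = 1 + quadraticChar F (-3) := by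
  have hfil : (univ.filter fun t : F => t ^ 2 + t + 1 = 0)
      = (univ.filter fun t : F => t ^ 2 + 1 * t + 1 = 0) := by
    apply Finset.filter_congr
    intro t _
    rw [one_mul]
  rw [hfil, card_quadratic_roots hF 1 1]
  congr 2
  norm_num

private lemma sum_croots_two (hF : ringChar F ≠ 2) :
    ∑ t ∈ univ.filter (fun t : F => t ^ 2 + t + 1 = 0), (2 : ℤ)
      = 2 * (1 + quadraticChar F (-3)) := by
  rw [Finset.sum_const, nsmul_eq_mul, card_Croots hF]
  ring

/-- `Σ₂₂₂` -/
private lemma Sig222 (hF : ringChar F ≠ 2) (h3 : (3 : F) ≠ 0) :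
    ∑ t : F, (1 + quadraticChar F (-3 * t ^ 2 - 2 * t - 3))
        * (quadraticChar F (t ^ 2 + t + 1) ^ 2 * quadraticChar F t ^ 2)
      = (Fintype.card F : ℤ) - quadraticChar F (-3) - 3 * (1 + quadraticChar F (-3)) := by
  rw [← Finset.sum_filter_add_sum_filter_not univ (fun t : F => t * (t ^ 2 + t + 1) = 0)]
  have hzero : ∑ t ∈ univ.filter (fun t : F => t * (t ^ 2 + t + 1) = 0),
      (1 + quadraticChar F (-3 * t ^ 2 - 2 * t - 3))
        * (quadraticChar F (t ^ 2 + t + 1) ^ 2 * quadraticChar F t ^ 2) = 0 := by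
    refine Finset.sum_eq_zero fun t ht => ?_
    rcases mul_eq_zero.mp (Finset.mem_filter.mp ht).2 with h | h
    · rw [h, quadraticChar_zero]; ring
    · rw [h, quadraticChar_zero]; ring
  rw [hzero, zero_add]
  have hpt : ∑ t ∈ univ.filter (fun t : F => ¬ t * (t ^ 2 + t + 1) = 0),
      (1 + quadraticChar F (-3 * t ^ 2 - 2 * t - 3))
        * (quadraticChar F (t ^ 2 + t + 1) ^ 2 * quadraticChar F t ^ 2)
      = ∑ t ∈ univ.filter (fun t : F => ¬ t * (t ^ 2 + t + 1) = 0),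
          (1 + quadraticChar F (-3 * t ^ 2 - 2 * t - 3)) := by
    refine Finset.sum_congr rfl fun t ht => ?_
    have h := (Finset.mem_filter.mp ht).2
    rcases mul_ne_zero_iff.mp h with ⟨ht0, htC⟩
    rw [quadraticChar_sq_one ht0, quadraticChar_sq_one htC]
    ring
  rw [hpt]
  have hsplit := Finset.sum_filter_add_sum_filter_not univ
    (fun t : F => t * (t ^ 2 + t + 1) = 0)
    (fun t : F => 1 + quadraticChar F (-3 * t ^ 2 - 2 * t - 3))
  have htot : ∑ t : F, (1 + quadraticChar F (-3 * t ^ 2 - 2 * t - 3))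
      = (Fintype.card F : ℤ) - quadraticChar F (-3) := by
    rw [Finset.sum_add_distrib, sum_D hF h3, Finset.sum_const, nsmul_eq_mul, mul_one,
      Finset.card_univ]
    ring
  have hfil : univ.filter (fun t : F => t * (t ^ 2 + t + 1) = 0)
      = insert (0 : F) (univ.filter fun t : F => t ^ 2 + t + 1 = 0) := by
    ext t
    simp only [Finset.mem_filter, Finset.mem_univ, true_and, Finset.mem_insert, mul_eq_zero]
  have h0notin : (0 : F) ∉ univ.filter (fun t : F => t ^ 2 + t + 1 = 0) := by
    simp only [Finset.mem_filter, Finset.mem_univ, true_and]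
    norm_num
  have hbad : ∑ t ∈ univ.filter (fun t : F => t * (t ^ 2 + t + 1) = 0),
      (1 + quadraticChar F (-3 * t ^ 2 - 2 * t - 3))
      = 3 * (1 + quadraticChar F (-3)) := by
    rw [hfil, Finset.sum_insert h0notin]
    rw [show (-3 : F) * 0 ^ 2 - 2 * 0 - 3 = -3 by norm_num]
    have hreC : ∑ t ∈ univ.filter (fun t : F => t ^ 2 + t + 1 = 0),
        (1 + quadraticChar F (-3 * t ^ 2 - 2 * t - 3))
        = ∑ t ∈ univ.filter (fun t : F => t ^ 2 + t + 1 = 0), (2 : ℤ) := by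
      refine Finset.sum_congr rfl fun t ht => ?_
      have htC := (Finset.mem_filter.mp ht).2
      have hD : (-3 : F) * t ^ 2 - 2 * t - 3 = t := by linear_combination -3 * htC
      rw [hD, chi_root_one htC]
      norm_num
    rw [hreC, sum_croots_two hF]
    ring
  rw [eq_sub_of_add_eq' hsplit, htot, hbad]

/-- `Σ₂₂₁` -/
private lemma Sig221 (hF : ringChar F ≠ 2) (h3 : (3 : F) ≠ 0) :
    ∑ t : F, (1 + quadraticChar F (-3 * t ^ 2 - 2 * t - 3))
        * (quadraticChar F (t ^ 2 + t + 1) ^ 2 * quadraticChar F t)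
      = quadraticChar F (-3)
        + (∑ v : F, quadraticChar F ((v ^ 2 - 4) * (v + 1) * (-3 * v - 2)))
        - 2 * (1 + quadraticChar F (-3)) := by
  rw [← Finset.sum_filter_add_sum_filter_not univ (fun t : F => t ^ 2 + t + 1 = 0)]
  have hzero : ∑ t ∈ univ.filter (fun t : F => t ^ 2 + t + 1 = 0),
      (1 + quadraticChar F (-3 * t ^ 2 - 2 * t - 3))
        * (quadraticChar F (t ^ 2 + t + 1) ^ 2 * quadraticChar F t) = 0 := by
    refine Finset.sum_eq_zero fun t ht => ?_
    rw [(Finset.mem_filter.mp ht).2, quadraticChar_zero]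
    ring
  rw [hzero, zero_add]
  have hpt : ∑ t ∈ univ.filter (fun t : F => ¬ t ^ 2 + t + 1 = 0),
      (1 + quadraticChar F (-3 * t ^ 2 - 2 * t - 3))
        * (quadraticChar F (t ^ 2 + t + 1) ^ 2 * quadraticChar F t)
      = ∑ t ∈ univ.filter (fun t : F => ¬ t ^ 2 + t + 1 = 0),
          (quadraticChar F t + quadraticChar F (t * (-3 * t ^ 2 - 2 * t - 3))) := by
    refine Finset.sum_congr rfl fun t ht => ?_
    have htC := (Finset.mem_filter.mp ht).2
    rw [quadraticChar_sq_one htC]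
    have hm : quadraticChar F (t * (-3 * t ^ 2 - 2 * t - 3))
        = quadraticChar F (-3 * t ^ 2 - 2 * t - 3) * quadraticChar F t := by
      rw [← map_mul]
      congr 1
      ring
    rw [hm]
    ring
  rw [hpt]
  have hsplit := Finset.sum_filter_add_sum_filter_not univ
    (fun t : F => t ^ 2 + t + 1 = 0)
    (fun t : F => quadraticChar F t + quadraticChar F (t * (-3 * t ^ 2 - 2 * t - 3)))
  have htot : ∑ t : F,
      (quadraticChar F t + quadraticChar F (t * (-3 * t ^ 2 - 2 * t - 3)))
      = quadraticChar F (-3)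
        + ∑ v : F, quadraticChar F ((v ^ 2 - 4) * (v + 1) * (-3 * v - 2)) := by
    rw [Finset.sum_add_distrib, quadraticChar_sum_zero hF, sumA_eq hF h3]
    ring
  have hbad : ∑ t ∈ univ.filter (fun t : F => t ^ 2 + t + 1 = 0),
      (quadraticChar F t + quadraticChar F (t * (-3 * t ^ 2 - 2 * t - 3)))
      = 2 * (1 + quadraticChar F (-3)) := by
    rw [← sum_croots_two hF]
    refine Finset.sum_congr rfl fun t ht => ?_
    have htC := (Finset.mem_filter.mp ht).2
    have hD : (-3 : F) * t ^ 2 - 2 * t - 3 = t := by linear_combination -3 * htC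
    rw [hD, chi_root_one htC, show t * t = t ^ 2 by ring,
      quadraticChar_sq_one' (root_ne_zero htC)]
    norm_num
  rw [eq_sub_of_add_eq' hsplit, htot, hbad]

/-- `Σ₁₁₂` -/
private lemma Sig112 (hF : ringChar F ≠ 2) (h3 : (3 : F) ≠ 0) :
    ∑ t : F, (1 + quadraticChar F (-3 * t ^ 2 - 2 * t - 3))
        * (quadraticChar F (t ^ 2 + t + 1) * quadraticChar F t ^ 2)
      = -1 + (∑ v : F, quadraticChar F ((v ^ 2 - 4) * (v + 1) * (-3 * v - 2)))
        - (1 + quadraticChar F (-3)) := by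
  rw [← Finset.add_sum_erase univ _ (mem_univ (0 : F))]
  have h00 : (1 + quadraticChar F (-3 * (0 : F) ^ 2 - 2 * 0 - 3))
      * (quadraticChar F ((0 : F) ^ 2 + 0 + 1) * quadraticChar F (0 : F) ^ 2) = 0 := by
    rw [quadraticChar_zero]
    ring
  rw [h00, zero_add]
  have hpt : ∑ t ∈ univ.erase (0 : F),
      (1 + quadraticChar F (-3 * t ^ 2 - 2 * t - 3))
        * (quadraticChar F (t ^ 2 + t + 1) * quadraticChar F t ^ 2)
      = ∑ t ∈ univ.erase (0 : F),
          (quadraticChar F (t ^ 2 + t + 1)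
            + quadraticChar F ((t ^ 2 + t + 1) * (-3 * t ^ 2 - 2 * t - 3))) := by
    refine Finset.sum_congr rfl fun t ht => ?_
    have ht0 : t ≠ 0 := (Finset.mem_erase.mp ht).1
    rw [quadraticChar_sq_one ht0]
    have hm : quadraticChar F ((t ^ 2 + t + 1) * (-3 * t ^ 2 - 2 * t - 3))
        = quadraticChar F (-3 * t ^ 2 - 2 * t - 3) * quadraticChar F (t ^ 2 + t + 1) := by
      rw [← map_mul]
      congr 1
      ring
    rw [hm]
    ring
  rw [hpt]
  have hsplit := Finset.add_sum_erase univ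
    (fun t : F => quadraticChar F (t ^ 2 + t + 1)
      + quadraticChar F ((t ^ 2 + t + 1) * (-3 * t ^ 2 - 2 * t - 3))) (mem_univ (0 : F))
  have h0v : quadraticChar F ((0 : F) ^ 2 + 0 + 1)
      + quadraticChar F (((0 : F) ^ 2 + 0 + 1) * (-3 * (0 : F) ^ 2 - 2 * 0 - 3))
      = 1 + quadraticChar F (-3) := by
    rw [show ((0 : F) ^ 2 + 0 + 1) * (-3 * (0 : F) ^ 2 - 2 * 0 - 3) = -3 by norm_num,
      show ((0 : F) ^ 2 + 0 + 1) = 1 by norm_num, map_one]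
  have htot : ∑ t : F, (quadraticChar F (t ^ 2 + t + 1)
      + quadraticChar F ((t ^ 2 + t + 1) * (-3 * t ^ 2 - 2 * t - 3)))
      = -1 + ∑ v : F, quadraticChar F ((v ^ 2 - 4) * (v + 1) * (-3 * v - 2)) := by
    rw [Finset.sum_add_distrib, sum_C hF h3, sumQ4_eq hF h3]
  have herase := hsplit
  rw [h0v] at herase
  linarith [herase, htot]

/-- `Σ₁₁₁` -/
private lemma Sig111 (hF : ringChar F ≠ 2) (h3 : (3 : F) ≠ 0) :
    ∑ t : F, (1 + quadraticChar F (-3 * t ^ 2 - 2 * t - 3))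
        * (quadraticChar F (t ^ 2 + t + 1) * quadraticChar F t)
      = 3 * ∑ x : F, quadraticChar F (x * (x + 1) * (x - 3)) := by
  have hpt : ∀ t : F, (1 + quadraticChar F (-3 * t ^ 2 - 2 * t - 3))
        * (quadraticChar F (t ^ 2 + t + 1) * quadraticChar F t)
      = quadraticChar F (t * (t ^ 2 + t + 1))
        + quadraticChar F (t * (t ^ 2 + t + 1) * (-3 * t ^ 2 - 2 * t - 3)) := by
    intro t
    have e1 : quadraticChar F (t ^ 2 + t + 1) * quadraticChar F t
        = quadraticChar F (t * (t ^ 2 + t + 1)) := by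
      rw [← map_mul]
      congr 1
      ring
    have e2 : quadraticChar F (t * (t ^ 2 + t + 1) * (-3 * t ^ 2 - 2 * t - 3))
        = quadraticChar F (-3 * t ^ 2 - 2 * t - 3) * quadraticChar F (t * (t ^ 2 + t + 1)) := by
      rw [← map_mul]
      congr 1
      ring
    rw [e1, e2]
    ring
  rw [Finset.sum_congr rfl fun t _ => hpt t, Finset.sum_add_distrib, lam_a_eq hF,
    lam_b_eq hF h3]
  ring

end Conic
section Main

variable {F : Type*} [Field F] [Fintype F] [DecidableEq F]

private lemma main_sum (hF : ringChar F ≠ 2) (h3 : (3 : F) ≠ 0) :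
    ∑ p ∈ Sset F,
      (quadraticChar F p.2 ^ 2 + quadraticChar F p.2)
        * (quadraticChar F (-1 - p.1 - p.2) ^ 2 + quadraticChar F (-1 - p.1 - p.2))
        * (quadraticChar F p.1 ^ 2 - quadraticChar F p.1)
      = (Fintype.card F : ℤ) - 3 * (∑ x : F, quadraticChar F (x * (x + 1) * (x - 3)))
        - 3 - 4 * quadraticChar F (-3) := by
  have hexp : ∀ p : F × F,
      (quadraticChar F p.2 ^ 2 + quadraticChar F p.2)
        * (quadraticChar F (-1 - p.1 - p.2) ^ 2 + quadraticChar F (-1 - p.1 - p.2))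
        * (quadraticChar F p.1 ^ 2 - quadraticChar F p.1)
      = quadraticChar F p.2 ^ 2 * quadraticChar F (-1 - p.1 - p.2) ^ 2 * quadraticChar F p.1 ^ 2
        - quadraticChar F p.2 ^ 2 * quadraticChar F (-1 - p.1 - p.2) ^ 2 * quadraticChar F p.1 ^ 1
        + quadraticChar F p.2 ^ 2 * quadraticChar F (-1 - p.1 - p.2) ^ 1 * quadraticChar F p.1 ^ 2
        - quadraticChar F p.2 ^ 2 * quadraticChar F (-1 - p.1 - p.2) ^ 1 * quadraticChar F p.1 ^ 1
        + quadraticChar F p.2 ^ 1 * quadraticChar F (-1 - p.1 - p.2) ^ 2 * quadraticChar F p.1 ^ 2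
        - quadraticChar F p.2 ^ 1 * quadraticChar F (-1 - p.1 - p.2) ^ 2 * quadraticChar F p.1 ^ 1
        + quadraticChar F p.2 ^ 1 * quadraticChar F (-1 - p.1 - p.2) ^ 1 * quadraticChar F p.1 ^ 2
        - quadraticChar F p.2 ^ 1 * quadraticChar F (-1 - p.1 - p.2) ^ 1 * quadraticChar F p.1 ^ 1
      := fun p => by ring
  rw [Finset.sum_congr rfl fun p _ => hexp p]
  simp only [Finset.sum_add_distrib, Finset.sum_sub_distrib]
  have swap : ∀ a b c : ℕ,
      (∑ p ∈ Sset F, quadraticChar F p.2 ^ a * quadraticChar F (-1 - p.1 - p.2) ^ b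
        * quadraticChar F p.1 ^ c)
      = ∑ p ∈ Sset F, quadraticChar F p.2 ^ b * quadraticChar F (-1 - p.1 - p.2) ^ a
        * quadraticChar F p.1 ^ c := fun a b c =>
    (S_swap (fun z w t => quadraticChar F z ^ a * quadraticChar F w ^ b
      * quadraticChar F t ^ c)).trans (Finset.sum_congr rfl fun p _ => by ring)
  have swap13 : ∀ a b c : ℕ,
      (∑ p ∈ Sset F, quadraticChar F p.2 ^ a * quadraticChar F (-1 - p.1 - p.2) ^ b
        * quadraticChar F p.1 ^ c)
      = ∑ p ∈ Sset F, quadraticChar F p.2 ^ c * quadraticChar F (-1 - p.1 - p.2) ^ b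
        * quadraticChar F p.1 ^ a := fun a b c =>
    (S_swap13 (fun z w t => quadraticChar F z ^ a * quadraticChar F w ^ b
      * quadraticChar F t ^ c)).trans (Finset.sum_congr rfl fun p _ => by ring)
  have e212 := (swap 2 1 2).trans (swap13 1 2 2)
  have e122 := swap13 1 2 2
  have e121 := (swap 1 2 1).trans (swap13 2 1 1)
  have e211 := swap13 2 1 1
  rw [e212, e122, e121, e211]
  have hmerge : ∀ e c : ℕ,
      (∑ p ∈ Sset F, quadraticChar F p.2 ^ e * quadraticChar F (-1 - p.1 - p.2) ^ e
        * quadraticChar F p.1 ^ c)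
      = ∑ t : F, (1 + quadraticChar F (-3 * t ^ 2 - 2 * t - 3))
          * (quadraticChar F (t ^ 2 + t + 1) ^ e * quadraticChar F t ^ c) := by
    intro e c
    rw [← S_fiber hF (fun t => quadraticChar F (t ^ 2 + t + 1) ^ e * quadraticChar F t ^ c)]
    refine Finset.sum_congr rfl fun p hp => ?_
    have hzw : p.2 * (-1 - p.1 - p.2) = p.1 ^ 2 + p.1 + 1 := by
      have h := mem_Sset.mp hp
      linear_combination -h
    show quadraticChar F p.2 ^ e * quadraticChar F (-1 - p.1 - p.2) ^ e
        * quadraticChar F p.1 ^ c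
      = quadraticChar F (p.1 ^ 2 + p.1 + 1) ^ e * quadraticChar F p.1 ^ c
    rw [← mul_pow, ← map_mul, hzw]
  rw [hmerge 2 2, hmerge 2 1, hmerge 1 2, hmerge 1 1]
  simp only [pow_one]
  rw [Sig222 hF h3, Sig221 hF h3, Sig112 hF h3, Sig111 hF h3]
  ring

private lemma G_ite (a b c : F) :
    (quadraticChar F a ^ 2 + quadraticChar F a)
      * (quadraticChar F b ^ 2 + quadraticChar F b)
      * (quadraticChar F c ^ 2 - quadraticChar F c)
    = if a ≠ 0 ∧ b ≠ 0 ∧ c ≠ 0 ∧ quadraticChar F a = 1 ∧ quadraticChar F b = 1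
        ∧ quadraticChar F c = -1 then 8 else 0 := by
  by_cases ha : a = 0
  · subst ha
    rw [quadraticChar_zero]
    simp
  by_cases hb : b = 0
  · subst hb
    rw [quadraticChar_zero]
    simp
  by_cases hc : c = 0
  · subst hc
    rw [quadraticChar_zero]
    simp
  rcases quadraticChar_dichotomy ha with h1 | h1 <;>
    rcases quadraticChar_dichotomy hb with h2 | h2 <;>
      rcases quadraticChar_dichotomy hc with h3 | h3 <;>
        rw [h1, h2, h3] <;> simp [ha, hb, hc, h1, h2, h3] <;> norm_num

end Main
theorem stmt7 (p n : ℕ) (hp : p.Prime) (hp2 : p ≠ 2) (hp3 : p ≠ 3) (hn : 0 < n)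
    (F : Type*) [Field F] [Fintype F] [DecidableEq F]
    (hcard : Fintype.card F = p ^ n) (hq : p ^ n % 4 = 3) :
    (8 : ℤ) * Nat.card {y : F × F × F //
        (y.1 ≠ 0 ∧ y.2.1 ≠ 0 ∧ y.2.2 ≠ 0) ∧ (y.1 + y.2.1 + y.2.2 + 1 = 0 ∧ y.1 ^ 2 + y.2.1 ^ 2 + y.2.2 ^ 2 + 1 = 0) ∧
        quadraticChar F y.1 = 1 ∧ quadraticChar F y.2.1 = 1 ∧ quadraticChar F y.2.2 = -1} =
      (p ^ n : ℤ) - 3 * (∑ x : F, quadraticChar F (x * (x + 1) * (x - 3))) - 3 - 4 * quadraticChar F (-3) := by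
  classical
  -- characteristic facts
  have hrc : ringChar F = p := by
    obtain ⟨m, hmp, hm⟩ := FiniteField.card F (ringChar F)
    have hdvd : ringChar F ∣ p ^ n := by
      rw [← hcard, hm]
      exact dvd_pow_self _ (by exact_mod_cast m.pos.ne')
    exact (Nat.prime_dvd_prime_iff_eq hmp hp).mp (hmp.dvd_of_dvd_pow hdvd)
  have hF2 : ringChar F ≠ 2 := by rw [hrc]; exact hp2
  have h2F : (2 : F) ≠ 0 := Ring.two_ne_zero hF2
  have h3F : (3 : F) ≠ 0 := by
    intro h
    have h' : ((3 : ℕ) : F) = 0 := by exact_mod_cast h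
    have hdvd : ringChar F ∣ 3 := (CharP.cast_eq_zero_iff F (ringChar F) 3).mp h'
    rw [hrc] at hdvd
    exact hp3 ((Nat.prime_dvd_prime_iff_eq hp (by norm_num)).mp hdvd)
  -- combinatorial reduction to a sum over the conic
  rw [Nat.card_eq_fintype_card, Fintype.card_subtype]
  have hcards : (univ.filter fun y : F × F × F =>
      (y.1 ≠ 0 ∧ y.2.1 ≠ 0 ∧ y.2.2 ≠ 0)
        ∧ (y.1 + y.2.1 + y.2.2 + 1 = 0 ∧ y.1 ^ 2 + y.2.1 ^ 2 + y.2.2 ^ 2 + 1 = 0)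
        ∧ quadraticChar F y.1 = 1 ∧ quadraticChar F y.2.1 = 1
        ∧ quadraticChar F y.2.2 = -1).card
      = (univ.filter fun q : F × F =>
          (q.2 ^ 2 + (1 + q.1) * q.2 + (q.1 ^ 2 + q.1 + 1) = 0)
            ∧ q.2 ≠ 0 ∧ (-1 - q.1 - q.2) ≠ 0 ∧ q.1 ≠ 0 ∧ quadraticChar F q.2 = 1
              ∧ quadraticChar F (-1 - q.1 - q.2) = 1 ∧ quadraticChar F q.1 = -1).card := by
    refine Finset.card_nbij' (fun y => (y.2.2, y.1)) (fun q => (q.2, -1 - q.1 - q.2, q.1))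
      ?_ ?_ ?_ ?_
    · intro y hy
      simp only [Finset.mem_coe, Finset.mem_filter, Finset.mem_univ, true_and] at hy ⊢
      obtain ⟨⟨hz, hw, ht⟩, ⟨h1, h2⟩, hs1, hs2, hs3⟩ := hy
      have hwv : -1 - y.2.2 - y.1 = y.2.1 := by linear_combination -h1
      have hquad : y.1 ^ 2 + (1 + y.2.2) * y.1 + (y.2.2 ^ 2 + y.2.2 + 1) = 0 := by
        have h2Q : (2 : F) * (y.1 ^ 2 + (1 + y.2.2) * y.1 + (y.2.2 ^ 2 + y.2.2 + 1)) = 0 := by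
          linear_combination h2 + (y.1 + y.2.2 + 1 - y.2.1) * h1
        rcases mul_eq_zero.mp h2Q with h | h
        · exact absurd h h2F
        · exact h
      refine ⟨hquad, hz, ?_, ht, hs1, ?_, hs3⟩
      · rw [hwv]; exact hw
      · rw [hwv]; exact hs2
    · intro q hq'
      simp only [Finset.mem_coe, Finset.mem_filter, Finset.mem_univ, true_and] at hq' ⊢
      obtain ⟨hquad, hz, hw, ht, hs1, hs2, hs3⟩ := hq'
      refine ⟨⟨hz, hw, ht⟩, ⟨by ring, ?_⟩, hs1, hs2, hs3⟩
      linear_combination 2 * hquad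
    · intro y hy
      simp only [Finset.mem_coe, Finset.mem_filter, Finset.mem_univ, true_and] at hy
      obtain ⟨_, ⟨h1, _⟩, _⟩ := hy
      have hwv : -1 - y.2.2 - y.1 = y.2.1 := by linear_combination -h1
      show (y.1, -1 - y.2.2 - y.1, y.2.2) = y
      rw [Prod.mk.injEq, Prod.mk.injEq]
      exact ⟨rfl, hwv, rfl⟩
    · intro q _
      rfl
  rw [hcards]
  -- turn the count into a character sum over the conic
  have hsum : ∑ q ∈ Sset F,
      (quadraticChar F q.2 ^ 2 + quadraticChar F q.2)
        * (quadraticChar F (-1 - q.1 - q.2) ^ 2 + quadraticChar F (-1 - q.1 - q.2))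
        * (quadraticChar F q.1 ^ 2 - quadraticChar F q.1)
      = 8 * ((univ.filter fun q : F × F =>
          (q.2 ^ 2 + (1 + q.1) * q.2 + (q.1 ^ 2 + q.1 + 1) = 0)
            ∧ q.2 ≠ 0 ∧ (-1 - q.1 - q.2) ≠ 0 ∧ q.1 ≠ 0 ∧ quadraticChar F q.2 = 1
              ∧ quadraticChar F (-1 - q.1 - q.2) = 1 ∧ quadraticChar F q.1 = -1).card : ℤ) := by
    rw [Finset.sum_congr rfl fun q _ =>
      G_ite (F := F) q.2 (-1 - q.1 - q.2) q.1]
    rw [Finset.sum_ite, Finset.sum_const, Finset.sum_const, nsmul_eq_mul, nsmul_eq_mul,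
      mul_zero, add_zero, mul_comm]
    congr 2
    rw [Sset, Finset.filter_filter]
  rw [main_sum hF2 h3F] at hsum
  rw [hcard] at hsum
  have : ((p ^ n : ℕ) : ℤ) = (p ^ n : ℤ) := by push_cast; ring
  rw [this] at hsum
  linarith [hsum]
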